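/- arXiv:0809.1604 — 5 statements merged into one kernel-verified Lean document; each statement's English description precedes it below -/
import Mathlib

section
/- If x_0, ..., x_l is a log-concave sequence of positive reals, then the sequence of partial sums X_m = x_0 + ... + x_m is also log-concave, i.e., X_{m-1} X_{m+1} ≤ X_m^2 for 0 < m < l. -/
open Finset in
lemma ratio_mono (l : ℕ) (x : ℕ → ℝ)
    (hx : ∀ i, i ≤ l → 0 < x i)
    (hlc : ∀ i, 0 < i → i < l → x (i - 1) * x (i + 1) ≤ x i ^ 2) :
    ∀ i j, i ≤ j → j < l → x (j + 1) * x i ≤ x j * x (i + 1) := by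
  intro i j hij hjl
  induction j with
  | zero =>
    interval_cases i
    exact le_of_eq (mul_comm _ _)
  | succ n ih =>
    rcases Nat.lt_or_ge i (n + 1) with h | h
    · have hn : n < l := Nat.lt_of_succ_lt hjl
      have ihn := ih (Nat.lt_succ_iff.mp h) hn
      have hlc' := hlc (n + 1) (Nat.succ_pos n) hjl
      simp only [Nat.add_sub_cancel] at hlc'
      have hxn : 0 < x n := hx n hn.le
      have hxn1 : 0 < x (n + 1) := hx (n + 1) hjl.le
      have hxi : 0 < x i := hx i (le_of_lt (h.trans hjl))
      -- x(n+2) * x n ≤ x(n+1)^2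
      -- goal: x(n+2) * x i ≤ x(n+1) * x(i+1)
      have key : x (n + 2) * x i * x n ≤ x (n + 1) * x (i + 1) * x n := by
        calc x (n + 2) * x i * x n = (x n * x (n + 2)) * x i := by ring
          _ ≤ x (n + 1) ^ 2 * x i := by
              exact mul_le_mul_of_nonneg_right hlc' hxi.le
          _ = x (n + 1) * (x (n + 1) * x i) := by ring
          _ ≤ x (n + 1) * (x n * x (i + 1)) :=
              mul_le_mul_of_nonneg_left ihn hxn1.le
          _ = x (n + 1) * x (i + 1) * x n := by ring
      exact le_of_mul_le_mul_right key hxn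
    · have : i = n + 1 := le_antisymm hij h
      subst this
      exact le_of_eq (mul_comm _ _)

open Finset in
/-- partial sums of a positive log-concave sequence are log-concave. -/
theorem partialSums_logConcave (l : ℕ) (x : ℕ → ℝ)
    (hx : ∀ i, i ≤ l → 0 < x i)
    (hlc : ∀ i, 0 < i → i < l → x (i - 1) * x (i + 1) ≤ x i ^ 2) :
    ∀ m, 0 < m → m < l →
      (∑ i ∈ range m, x i) * (∑ i ∈ range (m + 2), x i) ≤
      (∑ i ∈ range (m + 1), x i) ^ 2 := by
  intro m hm hml
  set A := ∑ i ∈ range m, x i with hA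
  have hB : ∑ i ∈ range (m + 1), x i = A + x m := Finset.sum_range_succ x m
  have hC : ∑ i ∈ range (m + 2), x i = (A + x m) + x (m + 1) := by
    rw [Finset.sum_range_succ, hB]
  rw [hB, hC]
  have hApos : 0 ≤ A := by
    apply Finset.sum_nonneg
    intro i hi
    exact (hx i (le_of_lt ((Finset.mem_range.mp hi).trans hml))).le
  have key : A * x (m + 1) ≤ (A + x m) * x m := by
    have step1 : A * x (m + 1) ≤ (∑ i ∈ range m, x (i + 1)) * x m := by
      rw [Finset.sum_mul, Finset.sum_mul]
      apply Finset.sum_le_sum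
      intro i hi
      have him : i < m := Finset.mem_range.mp hi
      have := ratio_mono l x hx hlc i m him.le hml
      calc x i * x (m + 1) = x (m + 1) * x i := mul_comm _ _
        _ ≤ x m * x (i + 1) := this
        _ = x (i + 1) * x m := mul_comm _ _
    have step2 : (∑ i ∈ range m, x (i + 1)) ≤ A + x m := by
      have : (∑ i ∈ range m, x (i + 1)) = (∑ i ∈ range (m + 1), x i) - x 0 := by
        rw [Finset.sum_range_succ' x m]
        ring
      rw [this, hB]
      have h0 : 0 < x 0 := hx 0 (Nat.zero_le l)
      linarith
    calc A * x (m + 1) ≤ (∑ i ∈ range m, x (i + 1)) * x m := step1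
      _ ≤ (A + x m) * x m :=
          mul_le_mul_of_nonneg_right step2 (hx m hml.le).le
  nlinarith [key]
end

section
/- With N(m, n, λ) the number of lattice paths in the m×n grid avoiding the removed Ferrers diagram of λ, for all valid m, n one has N(m, n+1, λ) · N(m+1, n, λ) ≤ N(m, n, λ) · N(m+1, n+1, λ). -/
/-- A partition given as an antitone, eventually-zero function `ℕ → ℕ`
(0-indexed: `lam 0` is the largest part `λ₁`). -/
def IsPartitionFun (lam : ℕ → ℕ) : Prop :=
  Antitone lam ∧ ∃ r : ℕ, ∀ i, r ≤ i → lam i = 0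

/-- The conjugate partition: `conjPart lam j = #{i : lam i > j}` (0-indexed,
so `conjPart lam 0` is `λ'₁`, the number of nonzero parts). -/
noncomputable def conjPart (lam : ℕ → ℕ) (j : ℕ) : ℕ := Nat.card {i : ℕ // j < lam i}

/-- `latticeN m n lam` is the number of monotone lattice paths (unit up/right
steps) from the lower-left to the upper-right corner of the `m`-row,
`n`-column grid that never go inside the Ferrers diagram of `lam` removed
from the upper-left corner.  Such paths are in bijection with antitone
sequences `μ : Fin m → {0,...,n}` (row `i` of the region weakly above-left of
the path) with `lam i ≤ μ i` for every row `i`. -/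
def latticeN (m n : ℕ) (lam : ℕ → ℕ) : ℕ :=
  (Finset.univ.filter (fun mu : Fin m → Fin (n + 1) =>
    (∀ i j : Fin m, i ≤ j → mu j ≤ mu i) ∧ ∀ i : Fin m, lam i ≤ (mu i : ℕ))).card

open scoped FinsetFamily

private lemma fin_val_inf {k : ℕ} (x y : Fin k) :
    ((x ⊓ y : Fin k) : ℕ) = min (x : ℕ) (y : ℕ) := by
  rcases le_total x y with h | h
  · rw [inf_eq_left.2 h, min_eq_left (Fin.le_def.1 h)]
  · rw [inf_eq_right.2 h, min_eq_right (Fin.le_def.1 h)]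

private lemma fin_val_sup {k : ℕ} (x y : Fin k) :
    ((x ⊔ y : Fin k) : ℕ) = max (x : ℕ) (y : ℕ) := by
  rcases le_total x y with h | h
  · rw [sup_eq_right.2 h, max_eq_right (Fin.le_def.1 h)]
  · rw [sup_eq_left.2 h, max_eq_left (Fin.le_def.1 h)]

/-- Appending the minimal allowed value preserves the path conditions. -/
private lemma snoc_cond (lam : ℕ → ℕ) (hA : Antitone lam) {m n : ℕ}
    (nu : Fin m → Fin (n + 2))
    (h1 : ∀ i j : Fin m, i ≤ j → nu j ≤ nu i) (h2 : ∀ i : Fin m, lam i ≤ (nu i : ℕ))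
    (c : Fin (n + 2)) (hc : (c : ℕ) = lam m) :
    (∀ i j : Fin (m + 1), i ≤ j →
        Fin.snoc (α := fun _ => Fin (n + 2)) nu c j ≤ Fin.snoc (α := fun _ => Fin (n + 2)) nu c i) ∧
      ∀ i : Fin (m + 1), lam i ≤ (Fin.snoc (α := fun _ => Fin (n + 2)) nu c i : ℕ) := by
  have key : ∀ i : Fin (m + 1), c ≤ Fin.snoc (α := fun _ => Fin (n + 2)) nu c i := by
    intro i
    induction i using Fin.lastCases with
    | last => simp [Fin.snoc_last]
    | cast i =>
      rw [Fin.snoc_castSucc, Fin.le_def, hc]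
      exact le_trans (hA (Nat.le_of_lt i.2)) (h2 i)
  constructor
  · intro i j hij
    induction j using Fin.lastCases with
    | last => rw [Fin.snoc_last]; exact key i
    | cast j =>
      induction i using Fin.lastCases with
      | last => exact absurd hij (not_le.2 (Fin.castSucc_lt_last j))
      | cast i =>
        rw [Fin.snoc_castSucc, Fin.snoc_castSucc]
        exact h1 i j (Fin.castSucc_le_castSucc_iff.1 hij)
  · intro i
    induction i using Fin.lastCases with
    | last => simp [Fin.snoc_last, hc, Fin.val_last]
    | cast i => rw [Fin.snoc_castSucc]; exact h2 i

private lemma cardA (lam : ℕ → ℕ) (hA : Antitone lam) (m n : ℕ) (hn : lam 0 ≤ n) :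
    latticeN m (n + 1) lam =
      (Finset.univ.filter (fun σ : Fin (m + 1) → Fin (n + 2) =>
        ((∀ i j : Fin (m + 1), i ≤ j → σ j ≤ σ i) ∧
          ∀ i : Fin (m + 1), lam i ≤ (σ i : ℕ)) ∧
        (σ (Fin.last m) : ℕ) = lam m)).card := by
  have hlm : lam m < n + 2 := by have := hA (Nat.zero_le m); omega
  unfold latticeN
  refine Finset.card_nbij' (fun mu => Fin.snoc mu ⟨lam m, hlm⟩)
    (fun σ => Fin.init σ) ?_ ?_ ?_ ?_
  · intro mu hmu
    rw [Finset.mem_coe, Finset.mem_filter] at hmu ⊢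
    obtain ⟨-, h1, h2⟩ := hmu
    refine ⟨Finset.mem_univ _, snoc_cond lam hA mu h1 h2 _ rfl, by simp [Fin.snoc_last]⟩
  · intro σ hσ
    rw [Finset.mem_coe, Finset.mem_filter] at hσ ⊢
    obtain ⟨-, ⟨h1, h2⟩, -⟩ := hσ
    refine ⟨Finset.mem_univ _, fun i j hij => ?_, fun i => ?_⟩
    · exact h1 _ _ (Fin.castSucc_le_castSucc_iff.2 hij)
    · simpa [Fin.init] using h2 i.castSucc
  · intro mu _
    exact Fin.init_snoc _ _
  · intro σ hσ
    rw [Finset.mem_coe, Finset.mem_filter] at hσ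
    obtain ⟨-, -, h3⟩ := hσ
    have : (⟨lam m, hlm⟩ : Fin (n + 2)) = σ (Fin.last m) := Fin.ext (by simp [h3])
    rw [this]
    exact Fin.snoc_init_self σ

private lemma cardB (lam : ℕ → ℕ) (hA : Antitone lam) (m n : ℕ) (hn : lam 0 ≤ n) :
    latticeN (m + 1) n lam =
      (Finset.univ.filter (fun σ : Fin (m + 1) → Fin (n + 2) =>
        ((∀ i j : Fin (m + 1), i ≤ j → σ j ≤ σ i) ∧
          ∀ i : Fin (m + 1), lam i ≤ (σ i : ℕ)) ∧
        (σ 0 : ℕ) ≤ n)).card := by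
  unfold latticeN
  refine Finset.card_nbij' (fun nu i => (nu i).castSucc)
    (fun σ i => ⟨min (σ i : ℕ) n, by omega⟩) ?_ ?_ ?_ ?_
  · intro nu hnu
    rw [Finset.mem_coe, Finset.mem_filter] at hnu ⊢
    obtain ⟨-, h1, h2⟩ := hnu
    refine ⟨Finset.mem_univ _, ⟨fun i j hij => ?_, fun i => ?_⟩, ?_⟩
    · exact Fin.castSucc_le_castSucc_iff.2 (h1 i j hij)
    · simpa using h2 i
    · simpa using Nat.lt_succ_iff.1 (nu 0).2
  · intro σ hσ
    rw [Finset.mem_coe, Finset.mem_filter] at hσ ⊢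
    obtain ⟨-, ⟨h1, h2⟩, -⟩ := hσ
    refine ⟨Finset.mem_univ _, fun i j hij => ?_, fun i => ?_⟩
    · exact Fin.mk_le_mk.2 (min_le_min (Fin.le_def.1 (h1 i j hij)) le_rfl)
    · have hi : lam i ≤ n := le_trans (hA (Nat.zero_le _)) hn
      exact le_min (h2 i) hi
  · intro nu hnu
    rw [Finset.mem_coe, Finset.mem_filter] at hnu
    funext i
    exact Fin.ext (by simp [Nat.min_eq_left (Nat.lt_succ_iff.1 (nu i).2)])
  · intro σ hσ
    rw [Finset.mem_coe, Finset.mem_filter] at hσ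
    obtain ⟨-, ⟨h1, -⟩, h3⟩ := hσ
    funext i
    have : (σ i : ℕ) ≤ n := le_trans (Fin.le_def.1 (h1 0 i (Fin.zero_le i))) h3
    exact Fin.ext (by simp [Nat.min_eq_left this])

private lemma cardC (lam : ℕ → ℕ) (hA : Antitone lam) (m n : ℕ) (hn : lam 0 ≤ n) :
    latticeN m n lam =
      (Finset.univ.filter (fun σ : Fin (m + 1) → Fin (n + 2) =>
        ((∀ i j : Fin (m + 1), i ≤ j → σ j ≤ σ i) ∧
          ∀ i : Fin (m + 1), lam i ≤ (σ i : ℕ)) ∧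
        ((σ (Fin.last m) : ℕ) = lam m ∧ (σ 0 : ℕ) ≤ n))).card := by
  have hlm : lam m < n + 2 := by have := hA (Nat.zero_le m); omega
  unfold latticeN
  refine Finset.card_nbij' (fun mu => Fin.snoc (fun i => (mu i).castSucc) ⟨lam m, hlm⟩)
    (fun σ i => ⟨min (σ i.castSucc : ℕ) n, by omega⟩) ?_ ?_ ?_ ?_
  · intro mu hmu
    rw [Finset.mem_coe, Finset.mem_filter] at hmu ⊢
    obtain ⟨-, h1, h2⟩ := hmu
    have hcond := snoc_cond lam hA (fun i => (mu i).castSucc)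
      (fun i j hij => Fin.castSucc_le_castSucc_iff.2 (h1 i j hij))
      (fun i => by simpa using h2 i) ⟨lam m, hlm⟩ rfl
    have hbound : ∀ i : Fin (m + 1),
        ((Fin.snoc (α := fun _ => Fin (n + 2)) (fun i => (mu i).castSucc) ⟨lam m, hlm⟩ i : Fin (n + 2)) : ℕ) ≤ n := by
      intro i
      induction i using Fin.lastCases with
      | last => simpa using le_trans (hA (Nat.zero_le m)) hn
      | cast i => simpa using Nat.lt_succ_iff.1 (mu i).2
    exact ⟨Finset.mem_univ _, hcond, by simp [Fin.snoc_last], hbound 0⟩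
  · intro σ hσ
    rw [Finset.mem_coe, Finset.mem_filter] at hσ ⊢
    obtain ⟨-, ⟨h1, h2⟩, -⟩ := hσ
    refine ⟨Finset.mem_univ _, fun i j hij => ?_, fun i => ?_⟩
    · exact Fin.mk_le_mk.2 (min_le_min
        (Fin.le_def.1 (h1 _ _ (Fin.castSucc_le_castSucc_iff.2 hij))) le_rfl)
    · have hi : lam i ≤ n := le_trans (hA (Nat.zero_le _)) hn
      exact le_min (by simpa using h2 i.castSucc) hi
  · intro mu _
    funext i
    refine Fin.ext ?_
    simp [Nat.min_eq_left (Nat.lt_succ_iff.1 (mu i).2)]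
  · intro σ hσ
    rw [Finset.mem_coe, Finset.mem_filter] at hσ
    obtain ⟨-, ⟨h1, -⟩, h3, h4⟩ := hσ
    funext i
    induction i using Fin.lastCases with
    | last =>
      simp only [Fin.snoc_last]
      exact Fin.ext (by simp [h3])
    | cast i =>
      simp only [Fin.snoc_castSucc]
      have : (σ i.castSucc : ℕ) ≤ n :=
        le_trans (Fin.le_def.1 (h1 0 i.castSucc (Fin.zero_le _))) h4
      exact Fin.ext (by simp [Nat.min_eq_left this])

/-- N(m, n+1, λ) · N(m+1, n, λ) ≤ N(m, n, λ) · N(m+1, n+1, λ). -/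
theorem latticeN_ineq_one (lam : ℕ → ℕ) (hlam : IsPartitionFun lam)
    (m n : ℕ) (hm : conjPart lam 0 ≤ m) (hn : lam 0 ≤ n) :
    latticeN m (n + 1) lam * latticeN (m + 1) n lam ≤
      latticeN m n lam * latticeN (m + 1) (n + 1) lam := by
  classical
  obtain ⟨hA, -⟩ := hlam
  set P : (Fin (m + 1) → Fin (n + 2)) → Prop := fun σ =>
    (∀ i j : Fin (m + 1), i ≤ j → σ j ≤ σ i) ∧ ∀ i : Fin (m + 1), lam i ≤ (σ i : ℕ) with hP
  set A : Finset (Fin (m + 1) → Fin (n + 2)) :=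
    Finset.univ.filter (fun σ => P σ ∧ (σ (Fin.last m) : ℕ) = lam m) with hAdef
  set B : Finset (Fin (m + 1) → Fin (n + 2)) :=
    Finset.univ.filter (fun σ => P σ ∧ (σ 0 : ℕ) ≤ n) with hBdef
  set C : Finset (Fin (m + 1) → Fin (n + 2)) :=
    Finset.univ.filter (fun σ => P σ ∧ ((σ (Fin.last m) : ℕ) = lam m ∧ (σ 0 : ℕ) ≤ n)) with hCdef
  set D : Finset (Fin (m + 1) → Fin (n + 2)) :=
    Finset.univ.filter (fun σ => P σ) with hDdef
  have hPinf : ∀ {a b}, P a → P b → P (a ⊓ b) := by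
    rintro a b ⟨ha1, ha2⟩ ⟨hb1, hb2⟩
    refine ⟨fun i j hij => le_inf (le_trans inf_le_left (ha1 i j hij))
      (le_trans inf_le_right (hb1 i j hij)), fun i => ?_⟩
    rw [Pi.inf_apply, fin_val_inf]
    exact le_min (ha2 i) (hb2 i)
  have hPsup : ∀ {a b}, P a → P b → P (a ⊔ b) := by
    rintro a b ⟨ha1, ha2⟩ ⟨hb1, hb2⟩
    refine ⟨fun i j hij => sup_le (le_trans (ha1 i j hij) le_sup_left)
      (le_trans (hb1 i j hij) le_sup_right), fun i => ?_⟩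
    rw [Pi.sup_apply, fin_val_sup]
    exact le_trans (ha2 i) (le_max_left _ _)
  have hinfs : A ⊼ B ⊆ C := by
    intro c hc
    rw [Finset.mem_infs] at hc
    obtain ⟨a, ha, b, hb, rfl⟩ := hc
    rw [hAdef, Finset.mem_filter] at ha
    rw [hBdef, Finset.mem_filter] at hb
    obtain ⟨-, hPa, ha3⟩ := ha
    obtain ⟨-, hPb, hb3⟩ := hb
    rw [hCdef, Finset.mem_filter]
    refine ⟨Finset.mem_univ _, hPinf hPa hPb, ?_, ?_⟩
    · rw [Pi.inf_apply, fin_val_inf, ha3]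
      exact Nat.min_eq_left (hPb.2 (Fin.last m))
    · rw [Pi.inf_apply, fin_val_inf]
      omega
  have hsups : A ⊻ B ⊆ D := by
    intro c hc
    rw [Finset.mem_sups] at hc
    obtain ⟨a, ha, b, hb, rfl⟩ := hc
    rw [hAdef, Finset.mem_filter] at ha
    rw [hBdef, Finset.mem_filter] at hb
    rw [hDdef, Finset.mem_filter]
    exact ⟨Finset.mem_univ _, hPsup ha.2.1 hb.2.1⟩
  have key : A.card * B.card ≤ C.card * D.card :=
    le_trans (Finset.le_card_infs_mul_card_sups A B)
      (Nat.mul_le_mul (Finset.card_le_card hinfs) (Finset.card_le_card hsups))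
  have eA : latticeN m (n + 1) lam = A.card := cardA lam hA m n hn
  have eB : latticeN (m + 1) n lam = B.card := cardB lam hA m n hn
  have eC : latticeN m n lam = C.card := cardC lam hA m n hn
  have eD : latticeN (m + 1) (n + 1) lam = D.card := rfl
  rw [eA, eB, eC, eD]
  exact key
end

section
/- With N(m, n, λ) the number of lattice paths in the m×n grid avoiding the removed Ferrers diagram of λ, for all valid m ≥ λ'_1 + 1 and n, one has N(m−1, n+1, λ) · N(m+1, n+1, λ) ≤ N(m, n+1, λ)^2; that is, N(m, n, λ) is log-concave in m for fixed n. -/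
/-! ### Auxiliary machinery -/

def lcExt (h : ℕ) (f : Fin h → ℕ) : ℕ → ℕ := fun y => if hy : y < h then f ⟨y, hy⟩ else 0

def lcShift (N h : ℕ) (f : Fin h → ℕ) : ℕ → ℕ :=
  fun y => if y = 0 then N else lcExt h f (y - 1)

lemma lcExt_le {h N : ℕ} {f : Fin h → ℕ} (hf : ∀ i, f i ≤ N) (y : ℕ) : lcExt h f y ≤ N := by
  unfold lcExt; split
  · exact hf _
  · exact Nat.zero_le _

lemma lcShift_le {h N : ℕ} {f : Fin h → ℕ} (hf : ∀ i, f i ≤ N) (y : ℕ) :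
    lcShift N h f y ≤ N := by
  unfold lcShift; split
  · exact le_rfl
  · exact lcExt_le hf _

lemma lcExt_eq {h : ℕ} (f : Fin h → ℕ) {y : ℕ} (hy : y < h) : lcExt h f y = f ⟨y, hy⟩ :=
  dif_pos hy

lemma lcExt_eq_zero {h : ℕ} (f : Fin h → ℕ) {y : ℕ} (hy : h ≤ y) : lcExt h f y = 0 :=
  dif_neg (by omega)

lemma lcShift_zero {N h : ℕ} (f : Fin h → ℕ) : lcShift N h f 0 = N := if_pos rfl

lemma lcShift_eq {N h : ℕ} (f : Fin h → ℕ) {y : ℕ} (hy1 : 1 ≤ y) (hy : y - 1 < h) :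
    lcShift N h f y = f ⟨y - 1, hy⟩ := by
  unfold lcShift; rw [if_neg (by omega), lcExt_eq]

lemma lcShift_eq_zero {N h : ℕ} (f : Fin h → ℕ) {y : ℕ} (hy1 : 1 ≤ y) (hy : h ≤ y - 1) :
    lcShift N h f y = 0 := by
  unfold lcShift; rw [if_neg (by omega), lcExt_eq_zero _ hy]

lemma lcExt_anti {h : ℕ} {f : Fin h → ℕ} (hf : ∀ i j : Fin h, i ≤ j → f j ≤ f i)
    {y z : ℕ} (hyz : y ≤ z) : lcExt h f z ≤ lcExt h f y := by
  unfold lcExt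
  split
  · rename_i hz
    rw [dif_pos (lt_of_le_of_lt hyz hz)]
    exact hf _ _ hyz
  · exact Nat.zero_le _

lemma lcShift_anti {N h : ℕ} {f : Fin h → ℕ} (hf : ∀ i j : Fin h, i ≤ j → f j ≤ f i)
    (hfN : ∀ i, f i ≤ N) {y z : ℕ} (hyz : y ≤ z) : lcShift N h f z ≤ lcShift N h f y := by
  unfold lcShift
  by_cases hy : y = 0
  · rw [if_pos hy]; split
    · exact le_rfl
    · exact lcExt_le hfN _
  · rw [if_neg hy, if_neg (by omega)]
    exact lcExt_anti hf (by omega)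

/-- The extended lower path (of the `(m-1)`-grid element, shifted down one row). -/
def lcP (m n : ℕ) (mu : Fin (m - 1) → Fin (n + 2)) : ℕ → ℕ :=
  lcShift (n + 1) (m - 1) (fun j => (mu j : ℕ))

/-- The extended upper path (of the `(m+1)`-grid element). -/
def lcQ (m n : ℕ) (nu : Fin (m + 1) → Fin (n + 2)) : ℕ → ℕ :=
  lcExt (m + 1) (fun j => (nu j : ℕ))

/-- The two paths share a lattice point at height `y`. -/
def lcCross (P Q : ℕ → ℕ) (y : ℕ) : Prop := P y ≤ Q (y - 1) ∧ Q y ≤ P (y - 1)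

instance lcCross.decPred (P Q : ℕ → ℕ) : DecidablePred (lcCross P Q) := fun _ =>
  instDecidableAnd

/-- The crossing index: the largest `y ≤ m` where the two paths cross. -/
def lcK (m : ℕ) (P Q : ℕ → ℕ) : ℕ := Nat.findGreatest (lcCross P Q) m

/-- The tail-swap map. -/
def lcSwap (m n : ℕ)
    (x : (Fin (m - 1) → Fin (n + 2)) × (Fin (m + 1) → Fin (n + 2))) :
    (Fin m → Fin (n + 2)) × (Fin m → Fin (n + 2)) :=
  (fun i =>
    ⟨if (i : ℕ) < lcK m (lcP m n x.1) (lcQ m n x.2) then lcQ m n x.2 i else lcP m n x.1 i, by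
      split
      · exact Nat.lt_succ_of_le (lcExt_le (fun j => Nat.lt_succ_iff.mp (x.2 j).isLt) _)
      · exact Nat.lt_succ_of_le (lcShift_le (fun j => Nat.lt_succ_iff.mp (x.1 j).isLt) _)⟩,
   fun i =>
    ⟨if (i : ℕ) + 1 < lcK m (lcP m n x.1) (lcQ m n x.2) then lcP m n x.1 ((i : ℕ) + 1)
      else lcQ m n x.2 ((i : ℕ) + 1), by
      split
      · exact Nat.lt_succ_of_le (lcShift_le (fun j => Nat.lt_succ_iff.mp (x.1 j).isLt) _)
      · exact Nat.lt_succ_of_le (lcExt_le (fun j => Nat.lt_succ_iff.mp (x.2 j).isLt) _)⟩)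

section Facts

variable {lam : ℕ → ℕ} {m n : ℕ} {mu : Fin (m - 1) → Fin (n + 2)} {nu : Fin (m + 1) → Fin (n + 2)}

lemma lcP_anti (hmu : ∀ i j : Fin (m - 1), i ≤ j → mu j ≤ mu i) {y z : ℕ} (h : y ≤ z) :
    lcP m n mu z ≤ lcP m n mu y :=
  lcShift_anti (fun i j hij => hmu i j hij) (fun i => Nat.lt_succ_iff.mp (mu i).isLt) h

lemma lcQ_anti (hnu : ∀ i j : Fin (m + 1), i ≤ j → nu j ≤ nu i) {y z : ℕ} (h : y ≤ z) :
    lcQ m n nu z ≤ lcQ m n nu y :=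
  lcExt_anti (fun i j hij => hnu i j hij) h

lemma lcP_le (y : ℕ) : lcP m n mu y ≤ n + 1 :=
  lcShift_le (fun j => Nat.lt_succ_iff.mp (mu j).isLt) y

lemma lcQ_le (y : ℕ) : lcQ m n nu y ≤ n + 1 :=
  lcExt_le (fun j => Nat.lt_succ_iff.mp (nu j).isLt) y

lemma lcP_zero : lcP m n mu 0 = n + 1 := lcShift_zero _

lemma lcP_top (hm1 : 1 ≤ m) {y : ℕ} (hy : m ≤ y) : lcP m n mu y = 0 :=
  lcShift_eq_zero _ (by omega) (by omega)



lemma lcP_eq {y : ℕ} (hy1 : 1 ≤ y) (hy : y - 1 < m - 1) :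
    lcP m n mu y = (mu ⟨y - 1, hy⟩ : ℕ) := lcShift_eq _ hy1 hy

lemma lcP_succ (i : Fin (m - 1)) : lcP m n mu ((i : ℕ) + 1) = (mu i : ℕ) := by
  have hi := i.isLt
  rw [lcP_eq (by omega) (by omega : (i : ℕ) + 1 - 1 < m - 1)]
  simp only [Nat.add_sub_cancel, Fin.eta]

lemma lcQ_val {y : ℕ} (hy : y < m + 1) : lcQ m n nu y = (nu ⟨y, hy⟩ : ℕ) := lcExt_eq _ hy

lemma lcP_lam (hanti : Antitone lam) (hlz : ∀ i, m - 1 ≤ i → lam i = 0) (hn : lam 0 ≤ n + 1)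
    (hmu2 : ∀ i : Fin (m - 1), lam i ≤ (mu i : ℕ)) (y : ℕ) : lam y ≤ lcP m n mu y := by
  rcases Nat.eq_zero_or_pos y with rfl | hy
  · rw [lcP_zero]; exact hn
  by_cases hy2 : y - 1 < m - 1
  · rw [lcP_eq (by omega) hy2]
    exact le_trans (hanti (by omega : y - 1 ≤ y)) (hmu2 ⟨y - 1, hy2⟩)
  · have h0 : lam y = 0 := hlz y (by omega)
    omega

lemma lcP_lam' (hlz : ∀ i, m - 1 ≤ i → lam i = 0)
    (hmu2 : ∀ i : Fin (m - 1), lam i ≤ (mu i : ℕ)) {y : ℕ} (hy : 1 ≤ y) :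
    lam (y - 1) ≤ lcP m n mu y := by
  by_cases hy2 : y - 1 < m - 1
  · rw [lcP_eq hy hy2]
    exact hmu2 ⟨y - 1, hy2⟩
  · have h0 : lam (y - 1) = 0 := hlz (y - 1) (by omega)
    omega

lemma lcQ_lam (hnu2 : ∀ i : Fin (m + 1), lam i ≤ (nu i : ℕ)) {y : ℕ} (hy : y < m + 1) :
    lam y ≤ lcQ m n nu y := by
  rw [lcQ_val hy]; exact hnu2 ⟨y, hy⟩

lemma lcK_le (m : ℕ) (P Q : ℕ → ℕ) : lcK m P Q ≤ m := Nat.findGreatest_le m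

lemma lcK_max (m : ℕ) {P Q : ℕ → ℕ} {y : ℕ} (h1 : lcK m P Q < y) (h2 : y ≤ m) :
    ¬ lcCross P Q y :=
  Nat.findGreatest_is_greatest h1 h2

lemma lcK_facts (hm1 : 1 ≤ m)
    (hmu1 : ∀ i j : Fin (m - 1), i ≤ j → mu j ≤ mu i)
    (hnu1 : ∀ i j : Fin (m + 1), i ≤ j → nu j ≤ nu i) :
    1 ≤ lcK m (lcP m n mu) (lcQ m n nu) ∧
      lcCross (lcP m n mu) (lcQ m n nu) (lcK m (lcP m n mu) (lcQ m n nu)) := by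
  have hPm : lcP m n mu m = 0 := lcP_top hm1 le_rfl
  have hex : ∃ y, 1 ≤ y ∧ y ≤ m ∧ lcCross (lcP m n mu) (lcQ m n nu) y := by
    by_cases h0 : lcP m n mu 0 ≤ lcQ m n nu 0
    · have h1 : lcP m n mu 1 ≤ lcP m n mu 0 := lcP_anti hmu1 (by omega)
      have h2 : lcQ m n nu 1 ≤ n + 1 := lcQ_le 1
      have h3 : lcP m n mu 0 = n + 1 := lcP_zero
      refine ⟨1, le_rfl, hm1, ?_, ?_⟩ <;>
        rw [show (1 : ℕ) - 1 = 0 from rfl] <;> omega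
    · have hfind : ∃ y, lcP m n mu y ≤ lcQ m n nu y := ⟨m, by omega⟩
      have hjm : Nat.find hfind ≤ m := Nat.find_min' hfind (by omega)
      have hjs : lcP m n mu (Nat.find hfind) ≤ lcQ m n nu (Nat.find hfind) :=
        Nat.find_spec hfind
      have hj0 : Nat.find hfind ≠ 0 := by
        intro hc
        rw [hc] at hjs
        exact h0 hjs
      have hjp : ¬ lcP m n mu (Nat.find hfind - 1) ≤ lcQ m n nu (Nat.find hfind - 1) :=
        Nat.find_min hfind (by omega)
      have hqa : lcQ m n nu (Nat.find hfind) ≤ lcQ m n nu (Nat.find hfind - 1) :=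
        lcQ_anti hnu1 (by omega)
      exact ⟨Nat.find hfind, by omega, hjm, by omega, by omega⟩
  obtain ⟨y0, hy01, hy0m, hy0c⟩ := hex
  constructor
  · exact le_trans hy01 (Nat.le_findGreatest hy0m hy0c)
  · exact Nat.findGreatest_spec hy0m hy0c

lemma lcSep (hm1 : 1 ≤ m)
    (hmu1 : ∀ i j : Fin (m - 1), i ≤ j → mu j ≤ mu i)
    (hnu1 : ∀ i j : Fin (m + 1), i ≤ j → nu j ≤ nu i) :
    ∀ j, lcK m (lcP m n mu) (lcQ m n nu) ≤ j → j + 1 ≤ m →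
      lcP m n mu j < lcQ m n nu (j + 1) := by
  have hPm : lcP m n mu m = 0 := lcP_top hm1 le_rfl
  have main : ∀ d j, lcK m (lcP m n mu) (lcQ m n nu) ≤ j → j + d + 1 = m →
      lcP m n mu j < lcQ m n nu (j + 1) := by
    intro d
    induction d with
    | zero =>
      intro j hj hjm
      have hnc : ¬ lcCross (lcP m n mu) (lcQ m n nu) m := lcK_max m (by omega) le_rfl
      rw [lcCross, not_and] at hnc
      have h2 := hnc (by omega)
      have e1 : lcQ m n nu m = lcQ m n nu (j + 1) := congrArg _ (by omega)
      have e2 : lcP m n mu (m - 1) = lcP m n mu j := congrArg _ (by omega)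
      omega
    | succ d ih =>
      intro j hj hjm
      have h2 : lcP m n mu (j + 1) < lcQ m n nu (j + 2) := ih (j + 1) (by omega) (by omega)
      have hq2 : lcQ m n nu (j + 2) ≤ lcQ m n nu (j + 1) := lcQ_anti hnu1 (by omega)
      have hq1 : lcQ m n nu (j + 1) ≤ lcQ m n nu j := lcQ_anti hnu1 (by omega)
      have hnc : ¬ lcCross (lcP m n mu) (lcQ m n nu) (j + 1) :=
        lcK_max m (by omega) (by omega)
      rw [lcCross, not_and] at hnc
      have e2 : lcQ m n nu (j + 1 - 1) = lcQ m n nu j := congrArg _ (by omega)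
      have e3 : lcP m n mu (j + 1 - 1) = lcP m n mu j := congrArg _ (by omega)
      have h3 := hnc (by omega)
      omega
  intro j hj hjm
  exact main (m - j - 1) j hj (by omega)

lemma lcSwap_fst_val (i : Fin m) : ((lcSwap m n (mu, nu)).1 i : ℕ) =
    if (i : ℕ) < lcK m (lcP m n mu) (lcQ m n nu) then lcQ m n nu i else lcP m n mu i :=
  rfl

lemma lcSwap_snd_val (i : Fin m) : ((lcSwap m n (mu, nu)).2 i : ℕ) =
    if (i : ℕ) + 1 < lcK m (lcP m n mu) (lcQ m n nu) then lcP m n mu ((i : ℕ) + 1)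
    else lcQ m n nu ((i : ℕ) + 1) :=
  rfl

lemma lcSwap_mem (hanti : Antitone lam) (hm1 : 1 ≤ m)
    (hlz : ∀ i, m - 1 ≤ i → lam i = 0) (hn : lam 0 ≤ n + 1)
    (hmu1 : ∀ i j : Fin (m - 1), i ≤ j → mu j ≤ mu i)
    (hmu2 : ∀ i : Fin (m - 1), lam i ≤ (mu i : ℕ))
    (hnu1 : ∀ i j : Fin (m + 1), i ≤ j → nu j ≤ nu i)
    (hnu2 : ∀ i : Fin (m + 1), lam i ≤ (nu i : ℕ)) :
    ((∀ i j : Fin m, i ≤ j → (lcSwap m n (mu, nu)).1 j ≤ (lcSwap m n (mu, nu)).1 i) ∧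
      ∀ i : Fin m, lam i ≤ ((lcSwap m n (mu, nu)).1 i : ℕ)) ∧
    ((∀ i j : Fin m, i ≤ j → (lcSwap m n (mu, nu)).2 j ≤ (lcSwap m n (mu, nu)).2 i) ∧
      ∀ i : Fin m, lam i ≤ ((lcSwap m n (mu, nu)).2 i : ℕ)) := by
  obtain ⟨hk1, hkc⟩ := lcK_facts hm1 hmu1 hnu1
  have hkm : lcK m (lcP m n mu) (lcQ m n nu) ≤ m := lcK_le m _ _
  obtain ⟨hkc1, hkc2⟩ := hkc
  refine ⟨⟨?_, ?_⟩, ?_, ?_⟩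
  · -- first component antitone
    intro i j hij
    have hij' : (i : ℕ) ≤ (j : ℕ) := hij
    rw [Fin.le_def, lcSwap_fst_val, lcSwap_fst_val]
    by_cases hik : (i : ℕ) < lcK m (lcP m n mu) (lcQ m n nu) <;>
      by_cases hjk : (j : ℕ) < lcK m (lcP m n mu) (lcQ m n nu)
    · rw [if_pos hik, if_pos hjk]
      exact lcQ_anti hnu1 hij'
    · rw [if_pos hik, if_neg hjk]
      exact le_trans (lcP_anti hmu1 (by omega))
        (le_trans hkc1 (lcQ_anti hnu1 (by omega)))
    · omega
    · rw [if_neg hik, if_neg hjk]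
      exact lcP_anti hmu1 hij'
  · -- first component above lam
    intro i
    rw [lcSwap_fst_val]
    by_cases hik : (i : ℕ) < lcK m (lcP m n mu) (lcQ m n nu)
    · rw [if_pos hik]
      exact lcQ_lam hnu2 (by have := i.isLt; omega)
    · rw [if_neg hik]
      exact lcP_lam hanti hlz hn hmu2 _
  · -- second component antitone
    intro i j hij
    have hij' : (i : ℕ) ≤ (j : ℕ) := hij
    rw [Fin.le_def, lcSwap_snd_val, lcSwap_snd_val]
    by_cases hik : (i : ℕ) + 1 < lcK m (lcP m n mu) (lcQ m n nu) <;>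
      by_cases hjk : (j : ℕ) + 1 < lcK m (lcP m n mu) (lcQ m n nu)
    · rw [if_pos hik, if_pos hjk]
      exact lcP_anti hmu1 (by omega)
    · rw [if_pos hik, if_neg hjk]
      exact le_trans (lcQ_anti hnu1 (by omega))
        (le_trans hkc2 (lcP_anti hmu1 (by omega)))
    · omega
    · rw [if_neg hik, if_neg hjk]
      exact lcQ_anti hnu1 (by omega)
  · -- second component above lam
    intro i
    rw [lcSwap_snd_val]
    by_cases hik : (i : ℕ) + 1 < lcK m (lcP m n mu) (lcQ m n nu)
    · rw [if_pos hik]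
      have h := lcP_lam' (mu := mu) hlz hmu2 (by omega : 1 ≤ (i : ℕ) + 1)
      rwa [Nat.add_sub_cancel] at h
    · rw [if_neg hik]
      by_cases hki : lcK m (lcP m n mu) (lcQ m n nu) ≤ (i : ℕ)
      · have hs := lcSep hm1 hmu1 hnu1 (i : ℕ) hki (by have := i.isLt; omega)
        have hl := lcP_lam hanti hlz hn hmu2 (i : ℕ)
        omega
      · -- here (i:ℕ) + 1 = k
        by_cases hkm2 : lcK m (lcP m n mu) (lcQ m n nu) = m
        · have h0 : lam (i : ℕ) = 0 := hlz _ (by omega)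
          omega
        · have hs := lcSep hm1 hmu1 hnu1 (lcK m (lcP m n mu) (lcQ m n nu)) le_rfl (by omega)
          have hq : lcQ m n nu (lcK m (lcP m n mu) (lcQ m n nu) + 1) ≤
              lcQ m n nu (lcK m (lcP m n mu) (lcQ m n nu)) := lcQ_anti hnu1 (by omega)
          have hl := lcP_lam' (mu := mu) hlz hmu2 hk1
          have e1 : lam (i : ℕ) = lam (lcK m (lcP m n mu) (lcQ m n nu) - 1) :=
            congrArg _ (by omega)
          have e2 : lcQ m n nu ((i : ℕ) + 1) = lcQ m n nu (lcK m (lcP m n mu) (lcQ m n nu)) :=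
            congrArg _ (by omega)
          omega

lemma lcK_image (hm1 : 1 ≤ m)
    (hmu1 : ∀ i j : Fin (m - 1), i ≤ j → mu j ≤ mu i)
    (hnu1 : ∀ i j : Fin (m + 1), i ≤ j → nu j ≤ nu i) :
    lcK m (lcExt m (fun i => ((lcSwap m n (mu, nu)).1 i : ℕ)))
        (lcShift (n + 1) m (fun i => ((lcSwap m n (mu, nu)).2 i : ℕ)))
      = lcK m (lcP m n mu) (lcQ m n nu) := by
  obtain ⟨hk1, hkc⟩ := lcK_facts hm1 hmu1 hnu1
  have hkm : lcK m (lcP m n mu) (lcQ m n nu) ≤ m := lcK_le m _ _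
  set K := lcK m (lcP m n mu) (lcQ m n nu) with hK
  set A := lcExt m (fun i => ((lcSwap m n (mu, nu)).1 i : ℕ)) with hA
  set B := lcShift (n + 1) m (fun i => ((lcSwap m n (mu, nu)).2 i : ℕ)) with hB
  have hAval : ∀ y, y < m → A y = if y < K then lcQ m n nu y else lcP m n mu y := by
    intro y hy
    rw [hA, lcExt_eq _ hy]
    rfl
  have hAm : A m = 0 := lcExt_eq_zero _ le_rfl
  have hBval : ∀ y, 1 ≤ y → y - 1 < m →
      B y = if y - 1 + 1 < K then lcP m n mu (y - 1 + 1) else lcQ m n nu (y - 1 + 1) := by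
    intro y hy1 hy
    rw [hB, lcShift_eq _ hy1 hy]
    rfl
  have hB0 : B 0 = n + 1 := lcShift_zero _
  have hAK : A K = lcP m n mu K := by
    rcases eq_or_lt_of_le hkm with h | h
    · rw [h, hAm, lcP_top hm1 le_rfl]
    · rw [hAval K h, if_neg (lt_irrefl K)]
  have hBK : B K = lcQ m n nu K := by
    have e : K - 1 + 1 = K := by omega
    rw [hBval K hk1 (by omega), e, if_neg (lt_irrefl K)]
  have hAK1 : A (K - 1) = lcQ m n nu (K - 1) := by
    rw [hAval (K - 1) (by omega), if_pos (by omega)]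
  have hBK1 : B (K - 1) = lcP m n mu (K - 1) := by
    rcases eq_or_lt_of_le hk1 with h | h
    · rw [← h]
      rw [show (1 : ℕ) - 1 = 0 from rfl, hB0, lcP_zero]
    · have e : K - 1 - 1 + 1 = K - 1 := by omega
      rw [hBval (K - 1) (by omega) (by omega), e, if_pos (by omega)]
  unfold lcK
  rw [Nat.findGreatest_eq_iff]
  refine ⟨hkm, fun _ => ?_, fun y hy1 hy2 => ?_⟩
  · rw [lcCross, hAK, hBK, hAK1, hBK1]
    exact ⟨lcP_anti hmu1 (by omega), lcQ_anti hnu1 (by omega)⟩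
  · intro hc
    have hAy : A y = lcP m n mu y := by
      rcases eq_or_lt_of_le hy2 with h | h
      · rw [h, hAm, lcP_top hm1 le_rfl]
      · rw [hAval y h, if_neg (by omega)]
    have hBy : B y = lcQ m n nu y := by
      have e : y - 1 + 1 = y := by omega
      rw [hBval y (by omega) (by omega), e, if_neg (by omega)]
    have hAy1 : A (y - 1) = lcP m n mu (y - 1) := by
      rw [hAval (y - 1) (by omega), if_neg (by omega)]
    have hBy1 : B (y - 1) = lcQ m n nu (y - 1) := by
      have e : y - 1 - 1 + 1 = y - 1 := by omega
      rw [hBval (y - 1) (by omega) (by omega), e, if_neg (by omega)]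
    rw [lcCross, hAy, hBy, hAy1, hBy1] at hc
    exact lcK_max m (by omega) hy2 hc

end Facts

lemma lam_zero_of_conj_le (lam : ℕ → ℕ) (hlam : IsPartitionFun lam) (i : ℕ)
    (hi : conjPart lam 0 ≤ i) : lam i = 0 := by
  by_contra h
  have hpos : 0 < lam i := Nat.pos_of_ne_zero h
  obtain ⟨hanti, r, hr⟩ := hlam
  have hsub : {j : ℕ | 0 < lam j} ⊆ Set.Iio r := by
    intro j hj
    by_contra hh
    simp only [Set.mem_Iio, not_lt] at hh
    have := hr j hh
    simp only [Set.mem_setOf_eq] at hj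
    omega
  have hfin : {j : ℕ | 0 < lam j}.Finite := (Set.finite_Iio r).subset hsub
  have : Finite {j : ℕ // 0 < lam j} := hfin.to_subtype
  have hinj : Function.Injective
      (fun t : Fin (i + 1) => (⟨(t : ℕ), lt_of_lt_of_le hpos (hanti (by omega))⟩ :
        {j : ℕ // 0 < lam j})) := by
    intro a b hab
    simpa [Fin.ext_iff] using congrArg Subtype.val hab
  have hcard : i + 1 ≤ Nat.card {j : ℕ // 0 < lam j} := by
    simpa using Nat.card_le_card_of_injective _ hinj
  unfold conjPart at hi
  omega

/-- N(m−1, n+1, λ) · N(m+1, n+1, λ) ≤ N(m, n+1, λ)², i.e.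
N(m, n, λ) is log-concave in m for fixed n. -/
theorem latticeN_ineq_two (lam : ℕ → ℕ) (hlam : IsPartitionFun lam)
    (m n : ℕ) (hm : conjPart lam 0 + 1 ≤ m) (hn : lam 0 ≤ n + 1) :
    latticeN (m - 1) (n + 1) lam * latticeN (m + 1) (n + 1) lam ≤
      latticeN m (n + 1) lam ^ 2 := by
  classical
  have hanti := hlam.1
  have hm1 : 1 ≤ m := by omega
  have hlz : ∀ i, m - 1 ≤ i → lam i = 0 := fun i hi =>
    lam_zero_of_conj_le lam hlam i (by omega)
  unfold latticeN
  rw [pow_two, ← Finset.card_product, ← Finset.card_product]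
  apply Finset.card_le_card_of_injOn (lcSwap m n)
  · rintro ⟨mu, nu⟩ hx
    rw [Finset.mem_coe, Finset.mem_product, Finset.mem_filter, Finset.mem_filter] at hx
    obtain ⟨⟨-, hmu1, hmu2⟩, -, hnu1, hnu2⟩ := hx
    obtain ⟨⟨s1a, s1b⟩, s2a, s2b⟩ := lcSwap_mem hanti hm1 hlz hn hmu1 hmu2 hnu1 hnu2
    rw [Finset.mem_coe, Finset.mem_product, Finset.mem_filter, Finset.mem_filter]
    exact ⟨⟨Finset.mem_univ _, s1a, s1b⟩, Finset.mem_univ _, s2a, s2b⟩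
  · rintro ⟨mu, nu⟩ hx ⟨mu', nu'⟩ hy heq
    rw [Finset.mem_coe, Finset.mem_product, Finset.mem_filter, Finset.mem_filter] at hx hy
    dsimp only at hx hy
    obtain ⟨⟨-, hmu1, hmu2⟩, -, hnu1, hnu2⟩ := hx
    obtain ⟨⟨-, hmu1', hmu2'⟩, -, hnu1', hnu2'⟩ := hy
    have hKeq : lcK m (lcP m n mu) (lcQ m n nu) = lcK m (lcP m n mu') (lcQ m n nu') := by
      have h1 := lcK_image (mu := mu) (nu := nu) hm1 hmu1 hnu1
      have h2 := lcK_image (mu := mu') (nu := nu') hm1 hmu1' hnu1'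
      rw [← h1, ← h2, heq]
    obtain ⟨hk1, -⟩ := lcK_facts hm1 hmu1 hnu1
    have hkm := lcK_le m (lcP m n mu) (lcQ m n nu)
    have hv1 : ∀ (y : ℕ) (hy : y < m),
        (if y < lcK m (lcP m n mu) (lcQ m n nu) then lcQ m n nu y else lcP m n mu y) =
        (if y < lcK m (lcP m n mu') (lcQ m n nu') then lcQ m n nu' y else lcP m n mu' y) := by
      intro y hy
      have h3 : ((lcSwap m n (mu, nu)).1 ⟨y, hy⟩ : ℕ) =
          ((lcSwap m n (mu', nu')).1 ⟨y, hy⟩ : ℕ) := by rw [heq]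
      rw [lcSwap_fst_val, lcSwap_fst_val] at h3
      exact h3
    have hv2 : ∀ (y : ℕ) (hy : y < m),
        (if y + 1 < lcK m (lcP m n mu) (lcQ m n nu) then lcP m n mu (y + 1)
          else lcQ m n nu (y + 1)) =
        (if y + 1 < lcK m (lcP m n mu') (lcQ m n nu') then lcP m n mu' (y + 1)
          else lcQ m n nu' (y + 1)) := by
      intro y hy
      have h3 : ((lcSwap m n (mu, nu)).2 ⟨y, hy⟩ : ℕ) =
          ((lcSwap m n (mu', nu')).2 ⟨y, hy⟩ : ℕ) := by rw [heq]
      rw [lcSwap_snd_val, lcSwap_snd_val] at h3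
      exact h3
    have hmu : mu = mu' := by
      funext i
      have hi := i.isLt
      by_cases hik : (i : ℕ) + 1 < lcK m (lcP m n mu) (lcQ m n nu)
      · have h := hv2 (i : ℕ) (by omega)
        rw [if_pos hik, if_pos (hKeq ▸ hik), lcP_succ, lcP_succ] at h
        exact Fin.val_injective h
      · have h := hv1 ((i : ℕ) + 1) (by omega)
        rw [if_neg hik, if_neg (hKeq ▸ hik), lcP_succ, lcP_succ] at h
        exact Fin.val_injective h
    have hnu : nu = nu' := by
      funext i
      have hi := i.isLt
      by_cases hik : (i : ℕ) < lcK m (lcP m n mu) (lcQ m n nu)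
      · have h := hv1 (i : ℕ) (by omega)
        rw [if_pos hik, if_pos (hKeq ▸ hik), lcQ_val hi, lcQ_val hi] at h
        simp only [Fin.eta] at h
        exact Fin.val_injective h
      · have h := hv2 ((i : ℕ) - 1) (by omega)
        rw [show (i : ℕ) - 1 + 1 = (i : ℕ) from by omega] at h
        rw [if_neg hik, if_neg (hKeq ▸ hik), lcQ_val hi, lcQ_val hi] at h
        simp only [Fin.eta] at h
        exact Fin.val_injective h
    rw [hmu, hnu]
end

section
/- With N(m, n, λ) counting lattice paths in the m×n grid avoiding the removed Ferrers diagram of λ, for every integer ℓ ≥ 0 and partition λ, the sequence N(λ'_1 + i, λ_1 + ℓ − i, λ) for i = 0, 1, ..., ℓ is log-concave: N(λ'_1 + i − 1, λ_1 + ℓ − i + 1, λ) · N(λ'_1 + i + 1, λ_1 + ℓ − i − 1, λ) ≤ N(λ'_1 + i, λ_1 + ℓ − i, λ)^2 for 0 < i < ℓ. -/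
section Aux

variable {lam f g : ℕ → ℕ} {m n : ℕ}

/-- Predicate describing the `ℕ → ℕ` model of a lattice path in the `m × n` grid
avoiding the Ferrers diagram of `lam`. -/
def IsSeq (m n : ℕ) (lam f : ℕ → ℕ) : Prop :=
  (∀ ⦃i j : ℕ⦄, i ≤ j → j < m → f j ≤ f i) ∧ (∀ i, i < m → lam i ≤ f i ∧ f i ≤ n) ∧
    (∀ i, m ≤ i → f i = 0)

lemma IsSeq.mono (h : IsSeq m n lam f) {i j : ℕ} (hij : i ≤ j) : f j ≤ f i := by
  rcases lt_or_ge j m with hj | hj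
  · exact h.1 hij hj
  · rw [h.2.2 j hj]; exact Nat.zero_le _

lemma IsSeq.ub (h : IsSeq m n lam f) (i : ℕ) : f i ≤ n := by
  rcases lt_or_ge i m with hi | hi
  · exact (h.2.1 i hi).2
  · rw [h.2.2 i hi]; exact Nat.zero_le _

lemma IsSeq.lb (h : IsSeq m n lam f) {i : ℕ} (hi : i < m) : lam i ≤ f i := (h.2.1 i hi).1

lemma IsSeq.zero (h : IsSeq m n lam f) {i : ℕ} (hi : m ≤ i) : f i = 0 := h.2.2 i hi

lemma isSeq_of_adj (hadj : ∀ i, i + 1 < m → f (i + 1) ≤ f i)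
    (hb : ∀ i, i < m → lam i ≤ f i ∧ f i ≤ n) (hz : ∀ i, m ≤ i → f i = 0) :
    IsSeq m n lam f := by
  refine ⟨?_, hb, hz⟩
  intro i j hij hjm
  induction j, hij using Nat.le_induction with
  | base => exact le_rfl
  | succ j hij ih => exact le_trans (hadj j hjm) (ih (by omega))

/-- The `Finset` of such sequences, as functions `ℕ → ℕ`. -/
noncomputable def seqSet (m n : ℕ) (lam : ℕ → ℕ) : Finset (ℕ → ℕ) :=
  letI : DecidableEq (ℕ → ℕ) := Classical.decEq _
  (Finset.univ.filter (fun mu : Fin m → Fin (n + 1) =>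
    (∀ i j : Fin m, i ≤ j → mu j ≤ mu i) ∧ ∀ i : Fin m, lam i ≤ (mu i : ℕ))).image
    (fun mu i => if h : i < m then (mu ⟨i, h⟩ : ℕ) else 0)

lemma mem_seqSet : f ∈ seqSet m n lam ↔ IsSeq m n lam f := by
  classical
  unfold seqSet
  simp only [Finset.mem_image, Finset.mem_filter, Finset.mem_univ, true_and]
  constructor
  · rintro ⟨mu, ⟨hmono, hlb⟩, rfl⟩
    refine ⟨?_, ?_, ?_⟩
    · intro i j hij hjm
      simp only [dif_pos hjm, dif_pos (lt_of_le_of_lt hij hjm)]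
      exact_mod_cast hmono ⟨i, _⟩ ⟨j, hjm⟩ hij
    · intro i him
      simp only [dif_pos him]
      exact ⟨hlb ⟨i, him⟩, Nat.lt_succ_iff.mp (Fin.is_lt _)⟩
    · intro i hi; simp [dif_neg (not_lt.mpr hi)]
  · rintro ⟨hmono, hb, hz⟩
    refine ⟨fun i => ⟨f i, Nat.lt_succ_iff.mpr (hb i i.2).2⟩, ⟨?_, ?_⟩, ?_⟩
    · intro i j hij
      exact hmono hij j.2
    · intro i
      exact (hb i i.2).1
    · funext i
      by_cases hi : i < m
      · simp [dif_pos hi]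
      · simp [dif_neg hi, hz i (by omega)]

lemma card_seqSet (m n : ℕ) (lam : ℕ → ℕ) : (seqSet m n lam).card = latticeN m n lam := by
  classical
  unfold seqSet latticeN
  rw [Finset.card_image_of_injOn]
  intro a _ b _ hab
  funext i
  have h := congrFun hab i.1
  simp only [dif_pos i.2] at h
  exact Fin.ext (by exact_mod_cast h)

lemma seqSet_zero (n : ℕ) (lam : ℕ → ℕ) : seqSet 0 n lam = {fun _ => 0} := by
  classical
  ext f
  rw [mem_seqSet, Finset.mem_singleton]
  constructor
  · intro h; funext i; exact h.zero (Nat.zero_le i)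
  · rintro rfl
    exact ⟨fun i j _ h => absurd h (Nat.not_lt_zero _), fun i hi => absurd hi (Nat.not_lt_zero i),
      fun i _ => rfl⟩

end Aux

section Rec

lemma card_seqSet_succ (m n : ℕ) (lam : ℕ → ℕ) :
    (seqSet (m + 1) n lam).card
      = ∑ v ∈ Finset.Icc (lam 0) n, (seqSet m v (fun i => lam (i + 1))).card := by
  classical
  rw [Finset.card_eq_sum_card_fiberwise
    (f := fun f : ℕ → ℕ => f 0) (t := Finset.Icc (lam 0) n) ?_]
  · apply Finset.sum_congr rfl
    intro v hv
    rw [Finset.mem_Icc] at hv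
    apply Finset.card_bij' (i := fun f _ => (fun i => f (i + 1)))
      (j := fun g _ => (fun i => if i = 0 then v else g (i - 1)))
    · -- left inverse
      intro f hf
      simp only [Finset.mem_filter, mem_seqSet] at hf
      funext i
      rcases Nat.eq_zero_or_pos i with rfl | hi
      · simp [hf.2]
      · simp only [if_neg (by omega : ¬ i = 0)]
        congr 1
        omega
    · -- right inverse
      intro g hg
      funext i
      simp
    · -- forward membership
      intro f hf
      simp only [Finset.mem_filter, mem_seqSet] at hf
      obtain ⟨hf, hf0⟩ := hf
      rw [mem_seqSet]
      refine ⟨?_, ?_, ?_⟩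
      · intro i j hij hjm
        exact hf.1 (by omega) (by omega)
      · intro i him
        refine ⟨(hf.2.1 (i + 1) (by omega)).1, ?_⟩
        calc f (i + 1) ≤ f 0 := hf.mono (by omega)
          _ = v := hf0
      · intro i hi
        exact hf.zero (by omega)
    · -- backward membership
      intro g hg
      rw [mem_seqSet] at hg
      simp only [Finset.mem_filter, mem_seqSet]
      refine ⟨⟨?_, ?_, ?_⟩, by simp⟩
      · intro i j hij hjm
        rcases Nat.eq_zero_or_pos i with rfl | hi
        · rcases Nat.eq_zero_or_pos j with rfl | hj
          · simp
          · simp only [if_neg (by omega : ¬ j = 0), if_pos rfl]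
            exact hg.ub _
        · simp only [if_neg (by omega : ¬ i = 0), if_neg (by omega : ¬ j = 0)]
          exact hg.mono (by omega)
      · intro i him
        rcases Nat.eq_zero_or_pos i with rfl | hi
        · simpa using ⟨hv.1, hv.2⟩
        · simp only [if_neg (by omega : ¬ i = 0)]
          constructor
          · have h1 := hg.lb (i := i - 1) (by omega)
            calc lam i = lam (i - 1 + 1) := by congr 1; omega
              _ ≤ g (i - 1) := h1
          · exact le_trans (hg.ub _) hv.2
      · intro i hi
        simp only [if_neg (by omega : ¬ i = 0)]
        exact hg.zero (by omega)
  · intro f hf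
    rw [Finset.mem_coe, mem_seqSet] at hf
    rw [Finset.mem_coe, Finset.mem_Icc]
    exact ⟨hf.lb (by omega), hf.ub 0⟩

end Rec

section Ratio

theorem ratio_lemma : ∀ (m : ℕ) (lam : ℕ → ℕ), Antitone lam → ∀ a b : ℕ, lam 0 ≤ a → a ≤ b →
    (seqSet m a lam).card * (seqSet m (b + 1) lam).card
      ≤ (seqSet m (a + 1) lam).card * (seqSet m b lam).card := by
  intro m
  induction m with
  | zero =>
    intro lam _ a b _ _
    simp [seqSet_zero]
  | succ m ih =>
    intro lam hlam a b ha hab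
    have hlam' : Antitone (fun i => lam (i + 1)) := fun i j hij => hlam (by omega)
    set F : ℕ → ℕ := fun v => (seqSet m v (fun i => lam (i + 1))).card with hF
    have adj : ∀ x y, lam 1 ≤ x → x ≤ y → F x * F (y + 1) ≤ F (x + 1) * F y :=
      fun x y hx hxy => ih _ hlam' x y hx hxy
    have gc : ∀ d x y x' y', x' = x + d → lam 1 ≤ x → x' ≤ y' → y' ≤ y → x + y = x' + y' →
        F x * F y ≤ F x' * F y' := by
      intro d
      induction d with
      | zero =>
        intro x y x' y' h1 _ _ _ h4
        obtain rfl : x' = x := by omega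
        obtain rfl : y' = y := by omega
        exact le_rfl
      | succ d ihd =>
        intro x y x' y' h1 hx h2 h3 h4
        have hxy : x < y := by omega
        calc F x * F y = F x * F ((y - 1) + 1) := by congr 2; omega
          _ ≤ F (x + 1) * F (y - 1) := adj x (y - 1) hx (by omega)
          _ ≤ F x' * F y' := ihd (x + 1) (y - 1) x' y' (by omega) (by omega) h2 (by omega)
              (by omega)
    have key : (∑ v ∈ Finset.Icc (lam 0) a, F v) * F (b + 1)
        ≤ F (a + 1) * ∑ v ∈ Finset.Icc (lam 0) b, F v := by
      rw [Finset.sum_mul]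
      have step1 : ∀ v ∈ Finset.Icc (lam 0) a, F v * F (b + 1) ≤ F (a + 1) * F (v + (b - a)) := by
        intro v hv
        rw [Finset.mem_Icc] at hv
        have hv1 : lam 1 ≤ v := le_trans (hlam (Nat.zero_le 1)) hv.1
        rcases le_total (a + 1) (v + (b - a)) with hc | hc
        · exact gc (a + 1 - v) v (b + 1) (a + 1) (v + (b - a)) (by omega) hv1 hc (by omega)
            (by omega)
        · calc F v * F (b + 1) ≤ F (v + (b - a)) * F (a + 1) :=
              gc (b - a) v (b + 1) (v + (b - a)) (a + 1) (by omega) hv1 hc (by omega) (by omega)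
            _ = F (a + 1) * F (v + (b - a)) := Nat.mul_comm _ _
      calc ∑ v ∈ Finset.Icc (lam 0) a, F v * F (b + 1)
          ≤ ∑ v ∈ Finset.Icc (lam 0) a, F (a + 1) * F (v + (b - a)) := Finset.sum_le_sum step1
        _ = F (a + 1) * ∑ v ∈ Finset.Icc (lam 0) a, F (v + (b - a)) := by rw [Finset.mul_sum]
        _ ≤ F (a + 1) * ∑ v ∈ Finset.Icc (lam 0) b, F v := ?_
      apply Nat.mul_le_mul_left
      have himg : ∑ v ∈ Finset.Icc (lam 0) a, F (v + (b - a))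
          = ∑ w ∈ Finset.Icc (lam 0 + (b - a)) (a + (b - a)), F w := by
        rw [← Finset.map_add_right_Icc, Finset.sum_map]
        rfl
      rw [himg]
      apply Finset.sum_le_sum_of_subset
      apply Finset.Icc_subset_Icc <;> omega
    rw [card_seqSet_succ, card_seqSet_succ, card_seqSet_succ, card_seqSet_succ]
    rw [Finset.sum_Icc_succ_top (by omega : lam 0 ≤ a + 1),
      Finset.sum_Icc_succ_top (by omega : lam 0 ≤ b + 1)]
    have expand : ∀ S T u w : ℕ, S * T + S * w ≤ S * T + u * T →
        S * (T + w) ≤ (S + u) * T := by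
      intro S T u w h
      calc S * (T + w) = S * T + S * w := by ring
        _ ≤ S * T + u * T := h
        _ = (S + u) * T := by ring
    exact expand _ _ _ _ (Nat.add_le_add_left key _)

end Ratio

section Swap

variable {lam f g : ℕ → ℕ} {m n₁ n₂ : ℕ}

/-- horizontal position of the (downshifted) short path at level `j`. -/
def swM (n₂ : ℕ) (f : ℕ → ℕ) (j : ℕ) : ℕ := if j = 0 then n₂ else f (j - 1)

/-- the two paths meet at level `j`. -/
def swW (n₂ : ℕ) (f g : ℕ → ℕ) (j : ℕ) : Prop :=
  swM n₂ f j ≤ g (j - 1) ∧ g j ≤ swM n₂ f (j - 1)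

instance (n₂ : ℕ) (f g : ℕ → ℕ) (j : ℕ) : Decidable (swW n₂ f g j) :=
  inferInstanceAs (Decidable (_ ∧ _))

/-- lowest level where the two paths meet. -/
noncomputable def swK (p n₂ : ℕ) (f g : ℕ → ℕ) : ℕ :=
  Nat.findGreatest (fun j => 1 ≤ j ∧ swW n₂ f g j) p

noncomputable def swS (p n₂ : ℕ) (f g : ℕ → ℕ) (i : ℕ) : ℕ :=
  if i + 1 < swK p n₂ f g then f i else g (i + 1)

noncomputable def swT (p n₂ : ℕ) (f g : ℕ → ℕ) (i : ℕ) : ℕ :=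
  if i < swK p n₂ f g then g i else f (i - 1)

/-- recovery of the splice level from the output pair. -/
noncomputable def swKS (p n₂ : ℕ) (t s : ℕ → ℕ) : ℕ :=
  Nat.findGreatest (fun j => 1 ≤ j ∧ ((if j = 0 then n₂ else s (j - 1)) ≤ t (j - 1) ∧
    t j ≤ (if j - 1 = 0 then n₂ else s (j - 2)))) p

lemma sw_key (hf : IsSeq m n₂ lam f) (hg : IsSeq (m + 2) n₁ lam g) (h12 : n₁ ≤ n₂) :
    ∀ d j, j + d = m + 1 → 1 ≤ j → (∀ t, j ≤ t → t ≤ m + 1 → ¬ swW n₂ f g t) →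
      swM n₂ f (j - 1) < g j := by
  intro d
  induction d with
  | zero =>
    intro j hj h1 hno
    obtain rfl : j = m + 1 := by omega
    have hW := hno (m + 1) le_rfl le_rfl
    rw [swW] at hW
    push_neg at hW
    apply hW
    have : swM n₂ f (m + 1) = 0 := by
      rw [swM, if_neg (by omega)]
      exact hf.zero (by omega)
    rw [this]
    exact Nat.zero_le _
  | succ d ihd =>
    intro j hj h1 hno
    have hIH : swM n₂ f j < g (j + 1) :=
      ihd (j + 1) (by omega) (by omega) (fun t ht1 ht2 => hno t (by omega) ht2)
    have hW := hno j le_rfl (by omega)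
    rw [swW] at hW
    push_neg at hW
    apply hW
    by_contra hcon
    push_neg at hcon
    have h2 : g (j + 1) ≤ g (j - 1) := hg.mono (by omega)
    omega

lemma sw_exists (hf : IsSeq m n₂ lam f) (hg : IsSeq (m + 2) n₁ lam g) (h12 : n₁ ≤ n₂) :
    ∃ j, 1 ≤ j ∧ j ≤ m + 1 ∧ swW n₂ f g j := by
  by_contra hno
  push_neg at hno
  have := sw_key hf hg h12 m 1 (by omega) le_rfl (fun t ht1 ht2 => hno t ht1 ht2)
  have h0 : swM n₂ f 0 = n₂ := by rw [swM, if_pos rfl]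
  have h1 : g 1 ≤ n₁ := hg.ub 1
  have h2 : swM n₂ f (1 - 1) = swM n₂ f 0 := rfl
  omega

lemma swK_one (hf : IsSeq m n₂ lam f) (hg : IsSeq (m + 2) n₁ lam g) (h12 : n₁ ≤ n₂) :
    1 ≤ swK (m + 1) n₂ f g := by
  classical
  obtain ⟨j, hj1, hjp, hjW⟩ := sw_exists hf hg h12
  calc 1 ≤ j := hj1
    _ ≤ swK (m + 1) n₂ f g := by
      rw [swK]
      exact Nat.le_findGreatest hjp ⟨hj1, hjW⟩

lemma swK_le : swK (m + 1) n₂ f g ≤ m + 1 := by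
  rw [swK]; exact Nat.findGreatest_le _

lemma swK_spec (hf : IsSeq m n₂ lam f) (hg : IsSeq (m + 2) n₁ lam g) (h12 : n₁ ≤ n₂) :
    swW n₂ f g (swK (m + 1) n₂ f g) := by
  classical
  obtain ⟨j, hj1, hjp, hjW⟩ := sw_exists hf hg h12
  have h := Nat.findGreatest_spec (P := fun j => 1 ≤ j ∧ swW n₂ f g j) hjp ⟨hj1, hjW⟩
  exact h.2

lemma swK_greatest (hf : IsSeq m n₂ lam f) (hg : IsSeq (m + 2) n₁ lam g) (h12 : n₁ ≤ n₂) :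
    ∀ j, swK (m + 1) n₂ f g < j → j ≤ m + 1 → swM n₂ f (j - 1) < g j := by
  intro j hkj hjp
  have hks := swK_one hf hg h12
  apply sw_key hf hg h12 (m + 1 - j) j (by omega) (by omega)
  intro t ht1 ht2
  have := Nat.findGreatest_is_greatest (P := fun j => 1 ≤ j ∧ swW n₂ f g j)
    (k := t) (by rw [swK] at hkj; omega) ht2
  intro hW
  exact this ⟨by omega, hW⟩

end Swap

section Swap2

variable {lam f g : ℕ → ℕ} {m n₁ n₂ : ℕ}

lemma swB1 (hf : IsSeq m n₂ lam f) (hg : IsSeq (m + 2) n₁ lam g) (h12 : n₁ ≤ n₂) :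
    f (swK (m + 1) n₂ f g - 1) ≤ g (swK (m + 1) n₂ f g - 1) := by
  have h1 := swK_one hf hg h12
  have h := (swK_spec hf hg h12).1
  rwa [swM, if_neg (by omega)] at h

lemma swB2 (hf : IsSeq m n₂ lam f) (hg : IsSeq (m + 2) n₁ lam g) (h12 : n₁ ≤ n₂)
    (h2 : 2 ≤ swK (m + 1) n₂ f g) :
    g (swK (m + 1) n₂ f g) ≤ f (swK (m + 1) n₂ f g - 2) := by
  have h := (swK_spec hf hg h12).2
  rw [swM, if_neg (by omega)] at h
  have e : swK (m + 1) n₂ f g - 1 - 1 = swK (m + 1) n₂ f g - 2 := by omega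
  rwa [e] at h

lemma swF2 (hf : IsSeq m n₂ lam f) (hg : IsSeq (m + 2) n₁ lam g) (h12 : n₁ ≤ n₂)
    {j : ℕ} (hj : swK (m + 1) n₂ f g < j) (hjp : j ≤ m + 1) :
    f (j - 2) < g j := by
  have h1 := swK_one hf hg h12
  have h := swK_greatest hf hg h12 j hj hjp
  rw [swM, if_neg (by omega)] at h
  have e : j - 1 - 1 = j - 2 := by omega
  rwa [e] at h

lemma swF3 (hf : IsSeq m n₂ lam f) (hg : IsSeq (m + 2) n₁ lam g) (h12 : n₁ ≤ n₂)
    (hk : swK (m + 1) n₂ f g < m + 1) :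
    f (swK (m + 1) n₂ f g - 1) < g (swK (m + 1) n₂ f g) := by
  have h1 := swK_one hf hg h12
  have h := swF2 hf hg h12 (j := swK (m + 1) n₂ f g + 1) (by omega) (by omega)
  have e : swK (m + 1) n₂ f g + 1 - 2 = swK (m + 1) n₂ f g - 1 := by omega
  rw [e] at h
  have h2 : g (swK (m + 1) n₂ f g + 1) ≤ g (swK (m + 1) n₂ f g) := hg.mono (by omega)
  omega

lemma swS_mem (hlam : Antitone lam) (hz : lam m = 0)
    (hf : IsSeq m n₂ lam f) (hg : IsSeq (m + 2) n₁ lam g) (h12 : n₁ ≤ n₂) :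
    IsSeq (m + 1) n₂ lam (swS (m + 1) n₂ f g) := by
  have hK1 := swK_one hf hg h12
  have hKle : swK (m + 1) n₂ f g ≤ m + 1 := swK_le
  apply isSeq_of_adj
  · intro i hi
    unfold swS
    rcases lt_trichotomy (i + 2) (swK (m + 1) n₂ f g) with h1 | h1 | h1
    · rw [if_pos (by omega), if_pos (by omega)]
      exact hf.mono (by omega)
    · rw [if_neg (by omega), if_pos (by omega)]
      have h2 := swB2 hf hg h12 (by omega)
      rw [← h1] at h2
      simpa using h2
    · rw [if_neg (by omega), if_neg (by omega)]
      exact hg.mono (by omega)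
  · intro i hi
    unfold swS
    by_cases h1 : i + 1 < swK (m + 1) n₂ f g
    · rw [if_pos h1]
      exact ⟨hf.lb (by omega), hf.ub i⟩
    · rw [if_neg h1]
      refine ⟨?_, le_trans (hg.ub _) h12⟩
      rcases lt_or_eq_of_le (by omega : swK (m + 1) n₂ f g ≤ i + 1) with h2 | h2
      · have h3 := swF2 hf hg h12 (j := i + 1) h2 (by omega)
        have e : i + 1 - 2 = i - 1 := by omega
        rw [e] at h3
        have h4 : lam i ≤ lam (i - 1) := hlam (by omega)
        have h5 : lam (i - 1) ≤ f (i - 1) := hf.lb (by omega)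
        omega
      · rcases lt_or_eq_of_le hKle with h3 | h3
        · have h4 := swF3 hf hg h12 h3
          rw [h2] at h4
          have e : i + 1 - 1 = i := by omega
          rw [e] at h4
          have h5 : lam i ≤ f i := hf.lb (by omega)
          omega
        · have e : i = m := by omega
          rw [e, hz]
          exact Nat.zero_le _
  · intro i hi
    unfold swS
    rw [if_neg (by omega)]
    exact hg.zero (by omega)

lemma swT_mem (hlam : Antitone lam)
    (hf : IsSeq m n₂ lam f) (hg : IsSeq (m + 2) n₁ lam g) (h12 : n₁ ≤ n₂) :
    IsSeq (m + 1) n₁ lam (swT (m + 1) n₂ f g) := by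
  have hK1 := swK_one hf hg h12
  have hKle : swK (m + 1) n₂ f g ≤ m + 1 := swK_le
  apply isSeq_of_adj
  · intro i hi
    unfold swT
    rcases lt_trichotomy (i + 1) (swK (m + 1) n₂ f g) with h1 | h1 | h1
    · rw [if_pos (by omega), if_pos (by omega)]
      exact hg.mono (by omega)
    · rw [if_neg (by omega), if_pos (by omega)]
      have h2 := swB1 hf hg h12
      rw [← h1] at h2
      simpa using h2
    · rw [if_neg (by omega), if_neg (by omega)]
      exact hf.mono (by omega)
  · intro i hi
    unfold swT
    by_cases h1 : i < swK (m + 1) n₂ f g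
    · rw [if_pos h1]
      exact ⟨hg.lb (by omega), hg.ub i⟩
    · rw [if_neg h1]
      constructor
      · have h4 : lam i ≤ lam (i - 1) := hlam (by omega)
        have h5 : lam (i - 1) ≤ f (i - 1) := hf.lb (by omega)
        omega
      · have h2 : f (i - 1) ≤ f (swK (m + 1) n₂ f g - 1) := hf.mono (by omega)
        have h3 := swB1 hf hg h12
        have h4 : g (swK (m + 1) n₂ f g - 1) ≤ n₁ := hg.ub _
        omega
  · intro i hi
    unfold swT
    rw [if_neg (by omega)]
    exact hf.zero (by omega)

lemma swKS_eq (hf : IsSeq m n₂ lam f) (hg : IsSeq (m + 2) n₁ lam g) (h12 : n₁ ≤ n₂) :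
    swKS (m + 1) n₂ (swT (m + 1) n₂ f g) (swS (m + 1) n₂ f g) = swK (m + 1) n₂ f g := by
  classical
  have hK1 := swK_one hf hg h12
  have hKle : swK (m + 1) n₂ f g ≤ m + 1 := swK_le
  set K := swK (m + 1) n₂ f g with hKdef
  have hPK : 1 ≤ K ∧ ((if K = 0 then n₂ else swS (m + 1) n₂ f g (K - 1)) ≤
      swT (m + 1) n₂ f g (K - 1) ∧ swT (m + 1) n₂ f g K ≤
      (if K - 1 = 0 then n₂ else swS (m + 1) n₂ f g (K - 2))) := by
    refine ⟨hK1, ?_, ?_⟩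
    · rw [if_neg (by omega)]
      unfold swS swT
      rw [if_neg (by omega), if_pos (by omega)]
      have e : K - 1 + 1 = K := by omega
      rw [e]
      exact hg.mono (by omega)
    · unfold swT
      rw [if_neg (by omega)]
      by_cases h1 : K - 1 = 0
      · rw [if_pos h1]
        exact hf.ub _
      · rw [if_neg h1]
        unfold swS
        rw [if_pos (by omega)]
        exact hf.mono (by omega)
  apply le_antisymm
  · by_contra hlt
    push_neg at hlt
    have hKSle : swKS (m + 1) n₂ (swT (m + 1) n₂ f g) (swS (m + 1) n₂ f g) ≤ m + 1 := by
      rw [swKS]; exact Nat.findGreatest_le _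
    set KS := swKS (m + 1) n₂ (swT (m + 1) n₂ f g) (swS (m + 1) n₂ f g) with hKSdef
    have hspec := Nat.findGreatest_spec
      (P := fun j : ℕ => 1 ≤ j ∧ ((if j = 0 then n₂ else swS (m + 1) n₂ f g (j - 1)) ≤
        swT (m + 1) n₂ f g (j - 1) ∧ swT (m + 1) n₂ f g j ≤
        (if j - 1 = 0 then n₂ else swS (m + 1) n₂ f g (j - 2)))) (m := K) hKle hPK
    rw [← swKS] at hspec
    rw [← hKSdef] at hspec
    obtain ⟨hKS1, hsp1, hsp2⟩ := hspec
    rw [if_neg (by omega)] at hsp1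
    unfold swS swT at hsp1
    rw [if_neg (by omega), if_neg (by omega)] at hsp1
    have e : KS - 1 + 1 = KS := by omega
    rw [e] at hsp1
    have h3 := swF2 hf hg h12 (j := KS) hlt hKSle
    have e2 : KS - 1 - 1 = KS - 2 := by omega
    rw [e2] at hsp1
    omega
  · rw [swKS]
    exact Nat.le_findGreatest hKle hPK

theorem swap_ineq (m n₁ n₂ : ℕ) (lam : ℕ → ℕ) (hlam : Antitone lam) (hz : lam m = 0)
    (h12 : n₁ ≤ n₂) :
    (seqSet m n₂ lam).card * (seqSet (m + 2) n₁ lam).card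
      ≤ (seqSet (m + 1) n₁ lam).card * (seqSet (m + 1) n₂ lam).card := by
  classical
  rw [← Finset.card_product, ← Finset.card_product]
  apply Finset.card_le_card_of_injOn
    (fun x => (swT (m + 1) n₂ x.1 x.2, swS (m + 1) n₂ x.1 x.2))
  · intro x hx
    have hx' : x.1 ∈ seqSet m n₂ lam ∧ x.2 ∈ seqSet (m + 2) n₁ lam := by
      simpa [Finset.mem_product] using hx
    obtain ⟨hf, hg⟩ := hx'
    rw [mem_seqSet] at hf hg
    have : (swT (m + 1) n₂ x.1 x.2, swS (m + 1) n₂ x.1 x.2) ∈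
        seqSet (m + 1) n₁ lam ×ˢ seqSet (m + 1) n₂ lam := by
      rw [Finset.mem_product]
      exact ⟨mem_seqSet.mpr (swT_mem hlam hf hg h12), mem_seqSet.mpr (swS_mem hlam hz hf hg h12)⟩
    exact this
  · intro x hx y hy heq
    have hx' : x.1 ∈ seqSet m n₂ lam ∧ x.2 ∈ seqSet (m + 2) n₁ lam := by
      simpa [Finset.mem_product] using hx
    have hy' : y.1 ∈ seqSet m n₂ lam ∧ y.2 ∈ seqSet (m + 2) n₁ lam := by
      simpa [Finset.mem_product] using hy
    have hfx := mem_seqSet.mp hx'.1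
    have hgx := mem_seqSet.mp hx'.2
    have hfy := mem_seqSet.mp hy'.1
    have hgy := mem_seqSet.mp hy'.2
    have hT : swT (m + 1) n₂ x.1 x.2 = swT (m + 1) n₂ y.1 y.2 := congrArg Prod.fst heq
    have hS : swS (m + 1) n₂ x.1 x.2 = swS (m + 1) n₂ y.1 y.2 := congrArg Prod.snd heq
    have hKeq : swK (m + 1) n₂ x.1 x.2 = swK (m + 1) n₂ y.1 y.2 := by
      rw [← swKS_eq hfx hgx h12, hT, hS, swKS_eq hfy hgy h12]
    have hK1x := swK_one hfx hgx h12
    have hK1y := swK_one hfy hgy h12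
    have hrecf : ∀ (f g : ℕ → ℕ), 1 ≤ swK (m + 1) n₂ f g → ∀ i,
        f i = if i + 1 < swK (m + 1) n₂ f g then swS (m + 1) n₂ f g i
          else swT (m + 1) n₂ f g (i + 1) := by
      intro f g hK i
      by_cases h : i + 1 < swK (m + 1) n₂ f g
      · rw [if_pos h]; unfold swS; rw [if_pos h]
      · rw [if_neg h]; unfold swT; rw [if_neg (by omega)]
        simp
    have hrecg : ∀ (f g : ℕ → ℕ), 1 ≤ swK (m + 1) n₂ f g → ∀ i,
        g i = if i < swK (m + 1) n₂ f g then swT (m + 1) n₂ f g i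
          else swS (m + 1) n₂ f g (i - 1) := by
      intro f g hK i
      by_cases h : i < swK (m + 1) n₂ f g
      · rw [if_pos h]; unfold swT; rw [if_pos h]
      · rw [if_neg h]; unfold swS; rw [if_neg (by omega)]
        congr 1
        omega
    have hx1 : x.1 = y.1 := by
      funext i
      rw [hrecf x.1 x.2 hK1x i, hrecf y.1 y.2 hK1y i, hKeq, hT, hS]
    have hx2 : x.2 = y.2 := by
      funext i
      rw [hrecg x.1 x.2 hK1x i, hrecg y.1 y.2 hK1y i, hKeq, hT, hS]
    exact Prod.ext hx1 hx2

end Swap2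

lemma conjPart_eventually_zero {lam : ℕ → ℕ} (hlam : IsPartitionFun lam) {j : ℕ}
    (hj : conjPart lam 0 ≤ j) : lam j = 0 := by
  by_contra hne
  obtain ⟨r, hr⟩ := hlam.2
  have hfin : Finite {i : ℕ // 0 < lam i} := by
    have : {i : ℕ | 0 < lam i} ⊆ Set.Iio r := by
      intro i hi
      simp only [Set.mem_Iio]
      by_contra hir
      push_neg at hir
      have := hr i hir
      simp only [Set.mem_setOf_eq] at hi
      omega
    exact (Set.Finite.subset (Set.finite_Iio r) this).to_subtype
  have hinj : Function.Injective (fun i : Fin (j + 1) => (⟨(i : ℕ),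
      lt_of_lt_of_le (Nat.pos_of_ne_zero hne) (hlam.1 (by omega : (i : ℕ) ≤ j))⟩ :
        {i : ℕ // 0 < lam i})) := by
    intro a b hab
    simpa [Fin.ext_iff] using congrArg Subtype.val hab
  have hcard := Nat.card_le_card_of_injective _ hinj
  simp only [Nat.card_eq_fintype_card, Fintype.card_fin] at hcard
  rw [conjPart] at hj
  omega

/-- Hildebrand's theorem: for every ℓ ≥ 0 the sequence
i ↦ N(λ'₁ + i, λ₁ + ℓ − i, λ), 0 ≤ i ≤ ℓ, is log-concave. -/
theorem hildebrand (lam : ℕ → ℕ) (hlam : IsPartitionFun lam) (ℓ : ℕ) :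
    ∀ i, 0 < i → i < ℓ →
      latticeN (conjPart lam 0 + i - 1) (lam 0 + ℓ - i + 1) lam *
        latticeN (conjPart lam 0 + i + 1) (lam 0 + ℓ - i - 1) lam ≤
      latticeN (conjPart lam 0 + i) (lam 0 + ℓ - i) lam ^ 2 := by
  intro i hi hil
  obtain ⟨e, rfl⟩ : ∃ e, i = e + 1 := ⟨i - 1, by omega⟩
  obtain ⟨d, rfl⟩ : ∃ d, ℓ = (e + 1) + d + 1 := ⟨ℓ - (e + 1) - 1, by omega⟩
  set r := conjPart lam 0 with hr
  set c := lam 0 with hc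
  have e1 : r + (e + 1) - 1 = r + e := by omega
  have e2 : c + ((e + 1) + d + 1) - (e + 1) + 1 = c + d + 2 := by omega
  have e3 : r + (e + 1) + 1 = (r + e) + 2 := by omega
  have e4 : c + ((e + 1) + d + 1) - (e + 1) - 1 = c + d := by omega
  have e5 : r + (e + 1) = (r + e) + 1 := by omega
  have e6 : c + ((e + 1) + d + 1) - (e + 1) = c + d + 1 := by omega
  rw [e1, e2, e3, e4, e5, e6]
  have hz : lam (r + e) = 0 := conjPart_eventually_zero hlam (by omega)
  have step1 : latticeN (r + e) (c + d + 2) lam * latticeN ((r + e) + 2) (c + d) lam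
      ≤ latticeN ((r + e) + 1) (c + d) lam * latticeN ((r + e) + 1) (c + d + 2) lam := by
    simp only [← card_seqSet]
    exact swap_ineq (r + e) (c + d) (c + d + 2) lam hlam.1 hz (by omega)
  have step2 : latticeN ((r + e) + 1) (c + d) lam * latticeN ((r + e) + 1) (c + d + 2) lam
      ≤ latticeN ((r + e) + 1) (c + d + 1) lam * latticeN ((r + e) + 1) (c + d + 1) lam := by
    simp only [← card_seqSet]
    have := ratio_lemma ((r + e) + 1) lam hlam.1 (c + d) (c + d + 1) (by omega) (by omega)
    calc (seqSet ((r + e) + 1) (c + d) lam).card * (seqSet ((r + e) + 1) (c + d + 2) lam).card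
        = (seqSet ((r + e) + 1) (c + d) lam).card *
          (seqSet ((r + e) + 1) ((c + d + 1) + 1) lam).card := by norm_num
      _ ≤ (seqSet ((r + e) + 1) ((c + d) + 1) lam).card *
          (seqSet ((r + e) + 1) (c + d + 1) lam).card := this
      _ = (seqSet ((r + e) + 1) (c + d + 1) lam).card *
          (seqSet ((r + e) + 1) (c + d + 1) lam).card := by norm_num
  calc latticeN (r + e) (c + d + 2) lam * latticeN ((r + e) + 2) (c + d) lam
      ≤ latticeN ((r + e) + 1) (c + d) lam * latticeN ((r + e) + 1) (c + d + 2) lam := step1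
    _ ≤ latticeN ((r + e) + 1) (c + d + 1) lam * latticeN ((r + e) + 1) (c + d + 1) lam := step2
    _ = latticeN ((r + e) + 1) (c + d + 1) lam ^ 2 := (sq _).symm
end

section
/- For any positive integer n, the sequence of binomial coefficients m ↦ C(m+n, n) is log-concave in m, and more strongly, for all sequences of partial-sum iterates: applying the partial-sum operator to any log-concave positive sequence preserves log-concavity; in particular C(m+n, n) = ∑_{k=0}^m C(k+n−1, n−1) is log-concave in m by induction on n. -/
open Finset

lemma choose_ratio (n k : ℕ) :
    (k + 1) * Nat.choose (k + 1 + n) n = (k + n + 1) * Nat.choose (k + n) n := by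
  have h := Nat.add_one_mul_choose_eq (k + n) k
  rw [Nat.choose_symm_add] at h
  have h2 : (k + 1 + n).choose n = (k + n + 1).choose (k + 1) := by
    rw [show k + n + 1 = k + 1 + n from by omega]
    exact Nat.choose_symm_of_eq_add (by omega)
  rw [h2]
  rw [mul_comm]
  omega

open Finset in
/-- the partial-sum operator preserves log-concavity of positive
sequences, and consequently (via the hockey-stick identity
C(m+n, n) = ∑_{k=0}^m C(k+n−1, n−1) and induction on n) for every positive
integer n the sequence m ↦ C(m+n, n) is log-concave in m. -/
theorem partialSum_logConcave_and_choose (n : ℕ) (hn : 0 < n) :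
    (∀ (l : ℕ) (x : ℕ → ℝ), (∀ i, i ≤ l → 0 < x i) →
      (∀ i, 0 < i → i < l → x (i - 1) * x (i + 1) ≤ x i ^ 2) →
      ∀ m, 0 < m → m < l →
        (∑ i ∈ range m, x i) * (∑ i ∈ range (m + 2), x i) ≤
          (∑ i ∈ range (m + 1), x i) ^ 2) ∧
    (∀ m, 0 < m →
      Nat.choose (m - 1 + n) n * Nat.choose (m + 1 + n) n ≤
        Nat.choose (m + n) n ^ 2) := by
  constructor
  · intro l x hpos hlc m hm hml
    -- key step: x (m+1) * x i ≤ x m * x (i+1) for i ≤ m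
    have claim : ∀ d i, i + d = m → x (m + 1) * x i ≤ x m * x (i + 1) := by
      intro d
      induction d with
      | zero => intro i hi; subst hi; simp; ring_nf; exact le_refl _
      | succ d ih =>
        intro i hi
        have hIH := ih (i + 1) (by omega)
        have hlc' := hlc (i + 1) (by omega) (by omega)
        simp only [Nat.add_sub_cancel] at hlc'
        have hx2 : 0 < x (i + 1 + 1) := hpos _ (by omega)
        have hxm1 : 0 < x (m + 1) := hpos _ (by omega)
        have hx1 : 0 < x (i + 1) := hpos _ (by omega)
        nlinarith [mul_le_mul_of_nonneg_left hlc' hxm1.le,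
          mul_le_mul_of_nonneg_right hIH hx1.le]
    have key : x (m + 1) * ∑ i ∈ range m, x i ≤ x m * ∑ i ∈ range (m + 1), x i := by
      rw [Finset.mul_sum, Finset.mul_sum]
      calc ∑ i ∈ range m, x (m + 1) * x i
          ≤ ∑ i ∈ range m, x m * x (i + 1) := by
            apply Finset.sum_le_sum
            intro i hi
            exact claim (m - i) i (by simp at hi; omega)
        _ ≤ ∑ i ∈ range (m + 1), x m * x i := by
            rw [Finset.sum_range_succ' (fun i => x m * x i) m]
            have : 0 ≤ x m * x 0 := by
              have := hpos m (by omega); have := hpos 0 (by omega); positivity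
            linarith
    have e2 : ∑ i ∈ range (m + 2), x i = (∑ i ∈ range (m + 1), x i) + x (m + 1) :=
      Finset.sum_range_succ x (m + 1)
    have e1 : ∑ i ∈ range (m + 1), x i = (∑ i ∈ range m, x i) + x m :=
      Finset.sum_range_succ x m
    have hSm : 0 ≤ ∑ i ∈ range m, x i :=
      Finset.sum_nonneg fun i hi => (hpos i (by simp at hi; omega)).le
    have sq : (∑ i ∈ range (m + 1), x i) ^ 2
        = (∑ i ∈ range m, x i) * (∑ i ∈ range (m + 1), x i)
          + x m * (∑ i ∈ range (m + 1), x i) := by rw [e1]; ring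
    rw [e2]
    nlinarith [key, hSm, sq]
  · intro m hm
    obtain ⟨k, rfl⟩ : ∃ k, m = k + 1 := ⟨m - 1, by omega⟩
    simp only [Nat.add_sub_cancel]
    have h1 := choose_ratio n k
    have h2 := choose_ratio n (k + 1)
    have h3 : Nat.choose (k + n) n ≤ Nat.choose (k + 1 + n) n :=
      Nat.choose_le_choose n (by omega)
    have h2' : (k + 2) * Nat.choose (k + 1 + 1 + n) n
        = (k + n + 2) * Nat.choose (k + 1 + n) n := by
      convert h2 using 2 <;> omega
    nlinarith [h1, h2', h3, Nat.zero_le (Nat.choose (k + n) n)]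
end
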